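/- arXiv:2310.00864 — 2 statements merged into one kernel-verified Lean document; each statement's English description precedes it below -/
import Mathlib

section
/- For every integer K ≥ 1, the generalized ψ-loss is Lipschitz continuous with constant 1 with respect to the supremum norm on ℝ^K: for all z, z' ∈ ℝ^K, |ψ(z) − ψ(z')| ≤ max_{1≤k≤K} |z_k − z'_k|. -/
/-- `Tgen s z = max (s - z 1, ..., s - z K, 0)`, the function `T_s` from the paper. -/
noncomputable def Tgen {K : ℕ} (s : ℝ) (z : Fin K → ℝ) : ℝ :=
  Finset.fold (· ⊔ ·) 0 (fun k => s - z k) Finset.univ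

/-- The generalized ψ-loss: `ψ z = T₁ z - T₀ z`. -/
noncomputable def psiLoss {K : ℕ} (z : Fin K → ℝ) : ℝ :=
  Tgen 1 z - Tgen 0 z

lemma fold_sup_eq_sup'_sup {β : Type*} [DecidableEq β]
    (s : Finset β) (h : s.Nonempty) (f : β → ℝ) (b : ℝ) :
    Finset.fold ((· ⊔ ·) : ℝ → ℝ → ℝ) b f s = s.sup' h f ⊔ b := by
  induction h using Finset.Nonempty.cons_induction with
  | singleton a => simp
  | cons a s ha hs ih =>
      rw [Finset.fold_cons, Finset.sup'_cons, ih, sup_assoc]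

lemma Tgen_eq {K : ℕ} (hne : (Finset.univ : Finset (Fin K)).Nonempty)
    (s : ℝ) (z : Fin K → ℝ) :
    Tgen s z = (s - Finset.univ.inf' hne z) ⊔ 0 := by
  rw [Tgen, fold_sup_eq_sup'_sup _ hne]
  congr 1
  rw [eq_comm, sub_eq_iff_eq_add]
  apply le_antisymm
  · obtain ⟨i, _, hi⟩ := Finset.exists_mem_eq_inf' hne z
    rw [hi]
    have : s - z i ≤ Finset.univ.sup' hne (fun k => s - z k) :=
      Finset.le_sup' (fun k => s - z k) (Finset.mem_univ i)
    linarith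
  · obtain ⟨i, _, hi⟩ := Finset.exists_mem_eq_sup' hne (fun k => s - z k)
    rw [hi]
    have : Finset.univ.inf' hne z ≤ z i := Finset.inf'_le _ (Finset.mem_univ i)
    linarith

lemma clamp_eq (m : ℝ) : (1 - m) ⊔ 0 - ((0 - m) ⊔ 0) = ((1 - m) ⊔ 0) ⊓ 1 := by
  rcases le_total m 0 with h | h
  · rw [sup_eq_left.2 (by linarith : (0:ℝ) ≤ 1 - m),
      sup_eq_left.2 (by linarith : (0:ℝ) ≤ 0 - m),
      inf_eq_right.2 (by linarith : (1:ℝ) ≤ 1 - m)]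
    ring
  · rcases le_total m 1 with h1 | h1
    · rw [sup_eq_left.2 (by linarith : (0:ℝ) ≤ 1 - m),
        sup_eq_right.2 (by linarith : (0:ℝ) - m ≤ 0),
        inf_eq_left.2 (by linarith : (1:ℝ) - m ≤ 1)]
      ring
    · rw [sup_eq_right.2 (by linarith : (1:ℝ) - m ≤ 0),
        sup_eq_right.2 (by linarith : (0:ℝ) - m ≤ 0),
        inf_eq_left.2 (by norm_num : (0:ℝ) ≤ 1)]
      ring

theorem stmt4 (K : ℕ) (hK : 1 ≤ K) (z z' : Fin K → ℝ) :
    |psiLoss z - psiLoss z'|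
      ≤ Finset.univ.sup'
          (⟨⟨0, hK⟩, Finset.mem_univ _⟩ : (Finset.univ : Finset (Fin K)).Nonempty)
          (fun k => |z k - z' k|) := by
  have hne : (Finset.univ : Finset (Fin K)).Nonempty := ⟨⟨0, hK⟩, Finset.mem_univ _⟩
  show |psiLoss z - psiLoss z'| ≤ Finset.univ.sup' hne (fun k => |z k - z' k|)
  set m := Finset.univ.inf' hne z with hm
  set m' := Finset.univ.inf' hne z' with hm'
  have hψ : psiLoss z = ((1 - m) ⊔ 0) ⊓ 1 := by
    rw [psiLoss, Tgen_eq hne, Tgen_eq hne, clamp_eq]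
  have hψ' : psiLoss z' = ((1 - m') ⊔ 0) ⊓ 1 := by
    rw [psiLoss, Tgen_eq hne, Tgen_eq hne, clamp_eq]
  have h1 : |psiLoss z - psiLoss z'| ≤ |m - m'| := by
    rw [hψ, hψ']
    calc |((1 - m) ⊔ 0) ⊓ 1 - ((1 - m') ⊔ 0) ⊓ 1|
        ≤ |(1 - m) ⊔ 0 - (1 - m') ⊔ 0| := abs_inf_sub_inf_le_abs _ _ _
      _ ≤ |(1 - m) - (1 - m')| := abs_sup_sub_sup_le_abs _ _ _
      _ = |m - m'| := by rw [show (1 - m) - (1 - m') = -(m - m') by ring, abs_neg]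
  refine h1.trans ?_
  rw [abs_sub_le_iff]
  constructor
  · obtain ⟨i, _, hi⟩ := Finset.exists_mem_eq_inf' hne z'
    have h2 : m ≤ z i := Finset.inf'_le _ (Finset.mem_univ i)
    have h3 : z i - z' i ≤ |z i - z' i| := le_abs_self _
    have h4 : |z i - z' i| ≤ Finset.univ.sup' hne (fun k => |z k - z' k|) :=
      Finset.le_sup' (fun k => |z k - z' k|) (Finset.mem_univ i)
    rw [hm', hi]
    linarith
  · obtain ⟨i, _, hi⟩ := Finset.exists_mem_eq_inf' hne z
    have h2 : m' ≤ z' i := Finset.inf'_le _ (Finset.mem_univ i)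
    have h3 : z' i - z i ≤ |z i - z' i| := by
      rw [abs_sub_comm]; exact le_abs_self _
    have h4 : |z i - z' i| ≤ Finset.univ.sup' hne (fun k => |z k - z' k|) :=
      Finset.le_sup' (fun k => |z k - z' k|) (Finset.mem_univ i)
    rw [hm, hi]
    linarith
end

section
/- Let K ≥ 1 be an integer and w : {−1,1}^K → ℝ, and define the conditional ψ-risk C_w(z) = Σ_{a ∈ {−1,1}^K} w(a) ψ(a ⊙ z) for z ∈ ℝ^K. Then the infimum of C_w over z ∈ ℝ^K equals Σ_{a ∈ {−1,1}^K} w(a) − max(0, max_{a ∈ {−1,1}^K} w(a)), and this infimum is attained. -/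
open scoped Classical in
/-- The set of sign vectors `{-1, 1}^K`, as a finset of `Fin K → ℝ`. -/
noncomputable def signVecs (K : ℕ) : Finset (Fin K → ℝ) :=
  Finset.image (fun (b : Fin K → Bool) (k : Fin K) => if b k then (1 : ℝ) else -1)
    Finset.univ

lemma mem_signVecs {K : ℕ} (a : Fin K → ℝ) :
    a ∈ signVecs K ↔ ∀ k, a k = 1 ∨ a k = -1 := by
  classical
  unfold signVecs
  constructor
  · intro h k
    rw [Finset.mem_image] at h
    obtain ⟨b, -, rfl⟩ := h
    by_cases hb : b k <;> simp [hb]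
  · intro h
    rw [Finset.mem_image]
    refine ⟨fun k => decide (a k = 1), Finset.mem_univ _, ?_⟩
    funext k
    rcases h k with h1 | h1 <;> norm_num [h1]

lemma signVecs_nonempty (K : ℕ) : (signVecs K).Nonempty :=
  ⟨fun _ => 1, (mem_signVecs _).mpr fun _ => Or.inl rfl⟩


lemma Tgen_fold {K : ℕ} (s : ℝ) (z : Fin K → ℝ) :
    Tgen s z = Finset.fold max 0 (fun k => s - z k) Finset.univ := rfl

lemma Tgen_le {K : ℕ} {s c : ℝ} {z : Fin K → ℝ} (h0 : 0 ≤ c)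
    (h : ∀ k, s - z k ≤ c) : Tgen s z ≤ c := by
  rw [Tgen_fold, Finset.fold_max_le]
  exact ⟨h0, fun k _ => h k⟩

lemma Tgen_nonneg {K : ℕ} (s : ℝ) (z : Fin K → ℝ) : 0 ≤ Tgen s z := by
  rw [Tgen_fold, Finset.le_fold_max]; exact Or.inl le_rfl

lemma sub_le_Tgen {K : ℕ} (s : ℝ) (z : Fin K → ℝ) (k : Fin K) :
    s - z k ≤ Tgen s z := by
  rw [Tgen_fold, Finset.le_fold_max]; exact Or.inr ⟨k, Finset.mem_univ k, le_rfl⟩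

lemma psi_le_one {K : ℕ} (y : Fin K → ℝ) : psiLoss y ≤ 1 := by
  have h : Tgen 1 y ≤ Tgen 0 y + 1 := by
    refine Tgen_le (by linarith [Tgen_nonneg 0 y]) (fun k => ?_)
    have := sub_le_Tgen 0 y k; linarith
  unfold psiLoss; linarith

lemma psi_nonneg {K : ℕ} (y : Fin K → ℝ) : 0 ≤ psiLoss y := by
  have h : Tgen 0 y ≤ Tgen 1 y := by
    refine Tgen_le (Tgen_nonneg 1 y) (fun k => ?_)
    have := sub_le_Tgen 1 y k; linarith
  unfold psiLoss; linarith

lemma psi_eq_one {K : ℕ} {y : Fin K → ℝ} (k0 : Fin K) (h : y k0 ≤ 0) :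
    psiLoss y = 1 := by
  have h1 : Tgen 1 y ≤ Tgen 0 y + 1 := by
    refine Tgen_le (by linarith [Tgen_nonneg 0 y]) (fun k => ?_)
    have := sub_le_Tgen 0 y k; linarith
  have h2 : Tgen 0 y + 1 ≤ Tgen 1 y := by
    have hk0 := sub_le_Tgen 1 y k0
    have : Tgen 0 y ≤ Tgen 1 y - 1 := by
      refine Tgen_le (by linarith) (fun k => ?_)
      have := sub_le_Tgen 1 y k; linarith
    linarith
  unfold psiLoss; linarith

lemma psi_eq_zero {K : ℕ} {y : Fin K → ℝ} (h : ∀ k, 1 ≤ y k) :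
    psiLoss y = 0 := by
  have h1 : Tgen 1 y ≤ 0 := Tgen_le le_rfl (fun k => by linarith [h k])
  have h0 : Tgen 0 y ≤ 0 := Tgen_le le_rfl (fun k => by linarith [h k])
  have := Tgen_nonneg 1 y
  have := Tgen_nonneg 0 y
  unfold psiLoss; linarith

theorem stmt11 (K : ℕ) (hK : 1 ≤ K) (w : (Fin K → ℝ) → ℝ) :
    IsLeast
      (Set.range fun z : Fin K → ℝ =>
        ∑ a ∈ signVecs K, w a * psiLoss (fun k => a k * z k))
      ((∑ a ∈ signVecs K, w a)
        - max 0 ((signVecs K).sup' (signVecs_nonempty K) w)) := by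
  classical
  set M0 := (signVecs K).sup' (signVecs_nonempty K) w with hM0
  constructor
  · -- membership: the value is attained
    by_cases hpos : 0 < M0
    · -- take z = 2 * a*, where a* is a maximizer
      obtain ⟨astar, hastar, hwstar⟩ :=
        Finset.exists_mem_eq_sup' (signVecs_nonempty K) w
      refine ⟨fun k => 2 * astar k, ?_⟩
      have hsum : ∀ a ∈ signVecs K,
          w a * psiLoss (fun k => a k * (2 * astar k))
            = w a - (if a = astar then w a else 0) := by
        intro a ha
        by_cases hae : a = astar
        · subst hae
          have : psiLoss (fun k => a k * (2 * a k)) = 0 := by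
            refine psi_eq_zero (fun k => ?_)
            rcases (mem_signVecs a).1 ha k with h1 | h1 <;> rw [h1] <;> norm_num
          rw [this]; simp
        · obtain ⟨k0, hk0⟩ : ∃ k, a k ≠ astar k := by
            by_contra hc
            push_neg at hc
            exact hae (funext hc)
          have hy : a k0 * (2 * astar k0) ≤ 0 := by
            rcases (mem_signVecs a).1 ha k0 with h1 | h1 <;>
              rcases (mem_signVecs astar).1 hastar k0 with h2 | h2 <;>
              first
                | (exact absurd (h1.trans h2.symm) hk0)
                | (rw [h1, h2]; norm_num)
          have : psiLoss (fun k => a k * (2 * astar k)) = 1 := psi_eq_one k0 hy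
          rw [this]; simp [hae]
      beta_reduce
      rw [Finset.sum_congr rfl hsum, Finset.sum_sub_distrib,
        Finset.sum_ite_eq' (signVecs K) astar w]
      simp [hastar, ← hwstar, max_eq_right hpos.le]
      exact hM0.symm
    · -- take z = 0
      push_neg at hpos
      refine ⟨fun _ => 0, ?_⟩
      have hsum : ∀ a ∈ signVecs K,
          w a * psiLoss (fun k => a k * 0) = w a := by
        intro a _
        have : psiLoss (fun k => a k * (0:ℝ)) = 1 :=
          psi_eq_one (y := fun k => a k * (0:ℝ)) ⟨0, hK⟩ (by norm_num)
        rw [this, mul_one]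
      beta_reduce
      rw [Finset.sum_congr rfl hsum]
      simp [max_eq_left hpos]
  · -- lower bound
    rintro v ⟨z, rfl⟩
    set M := max 0 M0 with hM
    have hMnn : 0 ≤ M := le_max_left _ _
    -- f a := 1 - psiLoss (a ⊙ z)
    set f : (Fin K → ℝ) → ℝ := fun a => 1 - psiLoss (fun k => a k * z k) with hf
    have hf0 : ∀ a, 0 ≤ f a := fun a => by
      have := psi_le_one (fun k => a k * z k); simp only [hf]; linarith
    have hf1 : ∀ a, f a ≤ 1 := fun a => by
      have := psi_nonneg (fun k => a k * z k); simp only [hf]; linarith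
    have hpos : ∀ a, f a ≠ 0 → ∀ k, 0 < a k * z k := by
      intro a hfa k
      by_contra hc
      push_neg at hc
      refine hfa ?_
      simp only [hf]
      rw [psi_eq_one (y := fun k => a k * z k) k hc]
      ring
    have huniq : ∀ a ∈ signVecs K, ∀ b ∈ signVecs K,
        f a ≠ 0 → f b ≠ 0 → a = b := by
      intro a ha b hb hfa hfb
      funext k
      rcases (mem_signVecs a).1 ha k with h1 | h1 <;>
        rcases (mem_signVecs b).1 hb k with h2 | h2 <;> rw [h1, h2]
      · have := hpos a hfa k
        have := hpos b hfb k
        rw [h1] at *; rw [h2] at *; nlinarith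
      · have := hpos a hfa k
        have := hpos b hfb k
        rw [h1] at *; rw [h2] at *; nlinarith
    have hsumf : ∑ a ∈ signVecs K, f a ≤ 1 := by
      by_cases hex : ∃ a ∈ signVecs K, f a ≠ 0
      · obtain ⟨a0, ha0, hfa0⟩ := hex
        have : ∑ a ∈ signVecs K, f a = f a0 := by
          refine Finset.sum_eq_single_of_mem a0 ha0 (fun b hb hne => ?_)
          by_contra hc
          exact hne (huniq b hb a0 ha0 hc hfa0)
        rw [this]; exact hf1 a0
      · push_neg at hex
        rw [Finset.sum_congr rfl (fun a ha => hex a ha)]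
        simp
    have key : ∑ a ∈ signVecs K, w a * f a ≤ M := by
      calc ∑ a ∈ signVecs K, w a * f a ≤ ∑ a ∈ signVecs K, M * f a := by
            refine Finset.sum_le_sum (fun a ha => ?_)
            exact mul_le_mul_of_nonneg_right
              (le_trans (Finset.le_sup' w ha) (le_max_right _ _)) (hf0 a)
        _ = M * ∑ a ∈ signVecs K, f a := by rw [Finset.mul_sum]
        _ ≤ M * 1 := mul_le_mul_of_nonneg_left hsumf hMnn
        _ = M := mul_one M
    have expand : ∑ a ∈ signVecs K, w a * f a
        = (∑ a ∈ signVecs K, w a)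
          - ∑ a ∈ signVecs K, w a * psiLoss (fun k => a k * z k) := by
      rw [← Finset.sum_sub_distrib]
      refine Finset.sum_congr rfl (fun a _ => ?_)
      simp only [hf]; ring
    rw [expand] at key
    linarith
end
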